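/- Let g : ℝ × ℝ → ℝ satisfy the Lipschitz condition |g(t, a) − g(t, b)| ≤ L_g·|a − b| for all t, a, b, with L_g > 0. Let τ_1, …, τ_N > 0 be time steps satisfying condition S1 and with max_k τ_k ≤ 1/(4L_g). Suppose y^0, …, y^N satisfy D_2 y^n = g(t_n, y^n) for 1 ≤ n ≤ N, and ȳ^0, …, ȳ^N satisfy the perturbed scheme D_2 ȳ^n = g(t_n, ȳ^n) + ε^n for 1 ≤ n ≤ N. Then for every 1 ≤ n ≤ N, |y^n − ȳ^n| ≤ 2·exp(4 L_g t_{n−1})·(|y^0 − ȳ^0| + 2·t_n·max_{1≤j≤n} |ε^j|) (zero-stability of the adaptive BDF2 method). -/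

import Mathlib

open Finset

/-- BDF2 convolution kernels `b^{(n)}_j` built from the step sizes `τ`. -/
noncomputable def bdf2 (τ : ℕ → ℝ) (n j : ℕ) : ℝ :=
  if n = 1 then (if j = 0 then 1 / τ 1 else 0)
  else if j = 0 then (1 + 2 * (τ n / τ (n - 1))) / (τ n * (1 + τ n / τ (n - 1)))
  else if j = 1 then -(τ n / τ (n - 1)) ^ 2 / (τ n * (1 + τ n / τ (n - 1)))
  else 0

/-- DOC kernels: `doc τ n g = θ^{(n)}_g`, defined by the recursive procedure
`θ^{(n)}_0 = 1/b^{(n)}_0`, `θ^{(n)}_{n-k} = -(1/b^{(k)}_0) ∑_{j=k+1}^n θ^{(n)}_{n-j} b^{(j)}_{j-k}`. -/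
noncomputable def doc (τ : ℕ → ℝ) (n : ℕ) : ℕ → ℝ
  | 0 => 1 / bdf2 τ n 0
  | (g + 1) =>
    -(1 / bdf2 τ (n - (g + 1)) 0) *
      ∑ i ∈ (Finset.range (g + 1)).attach,
        doc τ n i.1 * bdf2 τ (n - i.1) (g + 1 - i.1)
  decreasing_by exact Finset.mem_range.mp i.2

/-- The variable-step BDF2 formula `D_2 v^n = ∑_{k=1}^n b^{(n)}_{n-k} (v^k - v^{k-1})`. -/
noncomputable def D2 {V : Type*} [AddCommGroup V] [Module ℝ V]
    (τ : ℕ → ℝ) (v : ℕ → V) (n : ℕ) : V :=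
  ∑ k ∈ Finset.Icc 1 n, bdf2 τ n (n - k) • (v k - v (k - 1))

/-- Time levels `t_n = τ_1 + ⋯ + τ_n`. -/
noncomputable def tlv (τ : ℕ → ℝ) (n : ℕ) : ℝ := ∑ i ∈ Finset.Icc 1 n, τ i

-- AUX

lemma bdf2_high (τ : ℕ → ℝ) (n j : ℕ) (hj : 2 ≤ j) : bdf2 τ n j = 0 := by
  unfold bdf2; split_ifs with h1 h2 h3 h4 <;> first | omega | rfl

lemma bdf2_one (τ : ℕ → ℝ) (j : ℕ) (hj : j ≠ 0) : bdf2 τ 1 j = 0 := by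
  unfold bdf2; simp [hj]

section main
variable (τ : ℕ → ℝ) (N : ℕ) (hτ : ∀ k, 1 ≤ k → k ≤ N → 0 < τ k)
include hτ

lemma b0_pos (k : ℕ) (hk1 : 1 ≤ k) (hkN : k ≤ N) : 0 < bdf2 τ k 0 := by
  unfold bdf2
  rcases eq_or_lt_of_le hk1 with h | h
  · simp [← h]
    exact hτ 1 le_rfl (h ▸ hkN)
  · have hk2 : 2 ≤ k := h
    have h1 : (0:ℝ) < τ k := hτ k hk1 hkN
    have h2 : (0:ℝ) < τ (k-1) := hτ (k-1) (by omega) (by omega)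
    have hr : 0 < τ k / τ (k-1) := div_pos h1 h2
    have : k ≠ 1 := by omega
    simp only [this, if_false, if_pos rfl]
    apply div_pos (by linarith) (by positivity)

lemma b1_nonpos (k : ℕ) (hk1 : 2 ≤ k) (hkN : k ≤ N) : bdf2 τ k 1 ≤ 0 := by
  unfold bdf2
  have h1 : (0:ℝ) < τ k := hτ k (by omega) hkN
  have h2 : (0:ℝ) < τ (k-1) := hτ (k-1) (by omega) (by omega)
  have hr : 0 < τ k / τ (k-1) := div_pos h1 h2
  have hk : k ≠ 1 := by omega
  simp only [hk, if_false, one_ne_zero, if_pos rfl]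
  have : 0 < τ k * (1 + τ k / τ (k-1)) := by positivity
  have h3 : (0:ℝ) ≤ (τ k / τ (k-1))^2 := sq_nonneg _
  exact div_nonpos_of_nonpos_of_nonneg (by linarith) (by positivity)

end main

lemma doc_zero (τ : ℕ → ℝ) (n : ℕ) : doc τ n 0 = 1 / bdf2 τ n 0 := by
  rw [doc]

lemma doc_succ (τ : ℕ → ℝ) (n g : ℕ) :
    doc τ n (g+1) = -(1 / bdf2 τ (n - (g+1)) 0) * (doc τ n g * bdf2 τ (n - g) 1) := by
  rw [doc]
  congr 1
  rw [Finset.sum_attach (Finset.range (g+1)) (fun i => doc τ n i * bdf2 τ (n-i) (g+1-i))]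
  rw [Finset.sum_range_succ]
  have h : ∀ i ∈ Finset.range g, doc τ n i * bdf2 τ (n-i) (g+1-i) = 0 := by
    intro i hi
    rw [bdf2_high τ _ _ (by simp at hi; omega), mul_zero]
  rw [Finset.sum_eq_zero h, zero_add]
  norm_num

section main2
variable (τ : ℕ → ℝ) (N : ℕ) (hτ : ∀ k, 1 ≤ k → k ≤ N → 0 < τ k)
include hτ

lemma doc_nonneg (n : ℕ) (hn1 : 1 ≤ n) (hnN : n ≤ N) :
    ∀ g, g ≤ n - 1 → 0 ≤ doc τ n g := by
  intro g
  induction g with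
  | zero =>
    intro _
    rw [doc_zero]
    exact le_of_lt (one_div_pos.mpr (b0_pos τ N hτ n hn1 hnN))
  | succ g ih =>
    intro hg
    rw [doc_succ]
    have h1 : 0 ≤ doc τ n g := ih (by omega)
    have h2 : bdf2 τ (n - g) 1 ≤ 0 := b1_nonpos τ N hτ (n-g) (by omega) (by omega)
    have h3 : 0 < bdf2 τ (n - (g+1)) 0 := b0_pos τ N hτ (n-(g+1)) (by omega) (by omega)
    have : doc τ n g * bdf2 τ (n-g) 1 ≤ 0 := mul_nonpos_of_nonneg_of_nonpos h1 h2
    have h4 : 0 ≤ 1 / bdf2 τ (n - (g+1)) 0 := le_of_lt (one_div_pos.mpr h3)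
    nlinarith

end main2

section main3
variable (τ : ℕ → ℝ) (N : ℕ) (hτ : ∀ k, 1 ≤ k → k ≤ N → 0 < τ k)
include hτ

lemma doc_orth (k n : ℕ) (hk : 1 ≤ k) (hkn : k ≤ n) (hnN : n ≤ N) :
    ∑ j ∈ Finset.Icc k n, doc τ n (n-j) * bdf2 τ j (j-k) = if k = n then 1 else 0 := by
  rcases eq_or_lt_of_le hkn with h | h
  · subst h
    simp only [Finset.Icc_self, Finset.sum_singleton, Nat.sub_self, doc_zero, if_pos rfl]
    exact one_div_mul_cancel (ne_of_gt (b0_pos τ N hτ k hk hnN))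
  · rw [if_neg (by omega)]
    rw [Finset.Icc_eq_cons_Ioc (le_of_lt h), Finset.sum_cons]
    have hsum : ∑ j ∈ Finset.Ioc k n, doc τ n (n-j) * bdf2 τ j (j-k)
        = doc τ n (n-(k+1)) * bdf2 τ (k+1) 1 := by
      rw [Finset.sum_eq_single_of_mem (k+1) (by simp [Finset.mem_Ioc]; omega)]
      · norm_num
      · intro j hj hne
        simp only [Finset.mem_Ioc] at hj
        rw [bdf2_high τ j (j-k) (by omega), mul_zero]
    rw [hsum, Nat.sub_self]
    have hg : n - k = (n - k - 1) + 1 := by omega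
    rw [hg, doc_succ]
    have e1 : n - (n - k - 1 + 1) = k := by omega
    have e2 : n - (n - k - 1) = k + 1 := by omega
    rw [e1, e2]
    have hb0 : bdf2 τ k 0 ≠ 0 := ne_of_gt (b0_pos τ N hτ k hk (by omega))
    have e3 : n - (k+1) = n - k - 1 := by omega
    field_simp
    rw [e3]
    ring

lemma doc_inverse (n : ℕ) (hn1 : 1 ≤ n) (hnN : n ≤ N) (v : ℕ → ℝ) :
    ∑ j ∈ Finset.Icc 1 n, doc τ n (n-j) * D2 τ v j = v n - v (n-1) := by
  unfold D2
  simp only [smul_eq_mul, Finset.mul_sum]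
  rw [Finset.sum_comm' (t' := Finset.Icc 1 n) (s' := fun k => Finset.Icc k n)
    (by intro j k; simp only [Finset.mem_Icc]; omega)]
  have : ∀ k ∈ Finset.Icc 1 n,
      (∑ j ∈ Finset.Icc k n, doc τ n (n-j) * (bdf2 τ j (j-k) * (v k - v (k-1))))
      = (if k = n then 1 else 0) * (v k - v (k-1)) := by
    intro k hk
    simp only [Finset.mem_Icc] at hk
    calc ∑ j ∈ Finset.Icc k n, doc τ n (n-j) * (bdf2 τ j (j-k) * (v k - v (k-1)))
        = (∑ j ∈ Finset.Icc k n, doc τ n (n-j) * bdf2 τ j (j-k)) * (v k - v (k-1)) := by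
          rw [Finset.sum_mul]; exact Finset.sum_congr rfl (fun j hj => by ring)
      _ = (if k = n then 1 else 0) * (v k - v (k-1)) := by
          rw [doc_orth τ N hτ k n hk.1 hk.2 hnN]
  rw [Finset.sum_congr rfl this]
  rw [Finset.sum_eq_single_of_mem n (by simp [Finset.mem_Icc]; omega)]
  · rw [if_pos rfl, one_mul]
  · intro j hj hne
    rw [if_neg hne, zero_mul]

end main3

lemma tlv_diff (τ : ℕ → ℝ) (k : ℕ) (hk : 1 ≤ k) : tlv τ k - tlv τ (k-1) = τ k := by
  obtain ⟨m, rfl⟩ : ∃ m, k = m + 1 := ⟨k-1, by omega⟩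
  unfold tlv
  rw [Finset.sum_Icc_succ_top (by omega)]
  simp

section main4
variable (τ : ℕ → ℝ) (N : ℕ) (hτ : ∀ k, 1 ≤ k → k ≤ N → 0 < τ k)
include hτ

lemma D2_tlv (j : ℕ) (hj1 : 1 ≤ j) (hjN : j ≤ N) : D2 τ (tlv τ) j = 1 := by
  unfold D2
  have hcongr : ∀ k ∈ Finset.Icc 1 j, bdf2 τ j (j-k) • (tlv τ k - tlv τ (k-1))
      = bdf2 τ j (j-k) * τ k := by
    intro k hk
    simp only [Finset.mem_Icc] at hk
    rw [smul_eq_mul, tlv_diff τ k hk.1]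
  rw [Finset.sum_congr rfl hcongr]
  rcases eq_or_lt_of_le hj1 with h | h
  · subst h
    simp only [Finset.Icc_self, Finset.sum_singleton, Nat.sub_self]
    unfold bdf2
    simp only [if_pos rfl]
    exact one_div_mul_cancel (ne_of_gt (hτ 1 le_rfl hjN)) ▸ by
      simp only [↓reduceIte, Nat.sub_self]
      field_simp
  · obtain ⟨m, rfl⟩ : ∃ m, j = m + 2 := ⟨j-2, by omega⟩
    rw [show (m+2) = (m+1)+1 by rfl, Finset.sum_Icc_succ_top (by omega),
      Finset.sum_Icc_succ_top (by omega)]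
    have hz : ∑ k ∈ Finset.Icc 1 m, bdf2 τ (m+1+1) (m+1+1-k) * τ k = 0 := by
      apply Finset.sum_eq_zero
      intro k hk
      simp only [Finset.mem_Icc] at hk
      rw [bdf2_high τ _ _ (by omega), zero_mul]
    rw [hz, zero_add]
    have e1 : m+1+1 - (m+1) = 1 := by omega
    have e2 : m+1+1 - (m+1+1) = 0 := by omega
    rw [e1, e2]
    have ha : 0 < τ (m+2) := hτ (m+2) (by omega) hjN
    have hb : 0 < τ (m+1) := hτ (m+1) (by omega) (by omega)
    unfold bdf2
    have hne : (m+1+1) ≠ 1 := by omega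
    have esub : (m+1+1) - 1 = m+1 := by omega
    simp only [hne, if_false, if_pos rfl, one_ne_zero, esub]
    have h1 : (0:ℝ) < 1 + τ (m+1+1) / τ (m+1) := by positivity
    have ha' : τ (m+1+1) ≠ 0 := ne_of_gt (by exact_mod_cast ha)
    have hb' : τ (m+1) ≠ 0 := ne_of_gt hb
    simp only [↓reduceIte]
    field_simp
    ring

lemma doc_sum (n : ℕ) (hn1 : 1 ≤ n) (hnN : n ≤ N) :
    ∑ j ∈ Finset.Icc 1 n, doc τ n (n-j) = τ n := by
  have := doc_inverse τ N hτ n hn1 hnN (tlv τ)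
  rw [tlv_diff τ n hn1] at this
  rw [← this]
  apply Finset.sum_congr rfl
  intro j hj
  simp only [Finset.mem_Icc] at hj
  rw [D2_tlv τ N hτ j hj.1 (le_trans hj.2 hnN), mul_one]

end main4

lemma D2_sub (τ : ℕ → ℝ) (y ybar : ℕ → ℝ) (n : ℕ) :
    D2 τ (fun k => y k - ybar k) n = D2 τ y n - D2 τ ybar n := by
  unfold D2
  rw [← Finset.sum_sub_distrib]
  apply Finset.sum_congr rfl
  intro k _
  simp only [smul_eq_mul]
  ring

lemma tlv_nonneg (τ : ℕ → ℝ) (N : ℕ) (hτ : ∀ k, 1 ≤ k → k ≤ N → 0 < τ k)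
    (n : ℕ) (hn : n ≤ N) : 0 ≤ tlv τ n := by
  apply Finset.sum_nonneg
  intro k hk
  simp only [Finset.mem_Icc] at hk
  exact (hτ k hk.1 (le_trans hk.2 hn)).le

lemma tlv_mono (τ : ℕ → ℝ) (N : ℕ) (hτ : ∀ k, 1 ≤ k → k ≤ N → 0 < τ k)
    (a b : ℕ) (hab : a ≤ b) (hb : b ≤ N) : tlv τ a ≤ tlv τ b := by
  apply Finset.sum_le_sum_of_subset_of_nonneg
  · exact Finset.Icc_subset_Icc le_rfl hab
  · intro k hk _
    simp only [Finset.mem_Icc] at hk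
    exact (hτ k hk.1 (le_trans hk.2 hb)).le


set_option maxHeartbeats 1600000 in
/-- zero-stability of the adaptive BDF2 method for Lipschitz ODEs. -/
theorem bdf2_zero_stability
    (g : ℝ → ℝ → ℝ) (Lg : ℝ) (hLg : 0 < Lg)
    (hLip : ∀ t a b : ℝ, |g t a - g t b| ≤ Lg * |a - b|)
    (N : ℕ) (τ : ℕ → ℝ)
    (hτ : ∀ k, 1 ≤ k → k ≤ N → 0 < τ k)
    (hstep : ∀ k, 1 ≤ k → k ≤ N → τ k ≤ 1 / (4 * Lg))
    (hS1 : ∀ k, 2 ≤ k → k ≤ N →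
      0 < τ k / τ (k - 1) ∧ τ k / τ (k - 1) ≤ (3 + Real.sqrt 17) / 2)
    (y ybar ε : ℕ → ℝ)
    (hy : ∀ n, 1 ≤ n → n ≤ N → D2 τ y n = g (tlv τ n) (y n))
    (hybar : ∀ n, 1 ≤ n → n ≤ N → D2 τ ybar n = g (tlv τ n) (ybar n) + ε n) :
    ∀ n (hn : 1 ≤ n), n ≤ N →
      |y n - ybar n| ≤ 2 * Real.exp (4 * Lg * tlv τ (n - 1)) *
        (|y 0 - ybar 0| + 2 * tlv τ n *
          (Finset.Icc 1 n).sup' (Finset.nonempty_Icc.mpr hn) (fun j => |ε j|)) := by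
  intro m hm1 hmN
  set v : ℕ → ℝ := fun k => y k - ybar k with hv
  set E : ℕ → ℝ := fun k => |v k| with hEdef
  set εb : ℝ := (Finset.Icc 1 m).sup' (Finset.nonempty_Icc.mpr hm1) (fun j => |ε j|) with hεbdef
  have hεble : ∀ j, 1 ≤ j → j ≤ m → |ε j| ≤ εb := by
    intro j h1 h2
    exact Finset.le_sup' (fun j => |ε j|) (Finset.mem_Icc.mpr ⟨h1, h2⟩)
  have hεb0 : 0 ≤ εb := le_trans (abs_nonneg (ε m)) (hεble m hm1 le_rfl)
  -- the running maximum
  set φ : ℕ → ℝ := fun n => Nat.rec (E 0) (fun k ih => max ih (E (k+1))) n with hφdef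
  have hφ0 : φ 0 = E 0 := rfl
  have hφs : ∀ k, φ (k+1) = max (φ k) (E (k+1)) := fun k => rfl
  have hEφ : ∀ k, E k ≤ φ k := by
    intro k
    cases k with
    | zero => exact le_of_eq rfl
    | succ k => rw [hφs]; exact le_max_right _ _
  have hφmono : ∀ a b, a ≤ b → φ a ≤ φ b := by
    intro a b hab
    induction b with
    | zero => simp_all
    | succ b ih =>
      rcases Nat.lt_or_ge a (b+1) with h | h
      · exact le_trans (ih (by omega)) (by rw [hφs]; exact le_max_left _ _)
      · have : a = b + 1 := by omega
        subst this; rfl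
  have hφnn : ∀ k, 0 ≤ φ k := fun k => le_trans (abs_nonneg (v 0)) (hφmono 0 k (Nat.zero_le k))
  -- bound on the BDF2 residual
  have hD2v : ∀ j, 1 ≤ j → j ≤ m → |D2 τ v j| ≤ Lg * E j + εb := by
    intro j h1 h2
    rw [hv, D2_sub, hy j h1 (le_trans h2 hmN), hybar j h1 (le_trans h2 hmN)]
    have : g (tlv τ j) (y j) - (g (tlv τ j) (ybar j) + ε j)
        = (g (tlv τ j) (y j) - g (tlv τ j) (ybar j)) - ε j := by ring
    rw [this]
    calc |g (tlv τ j) (y j) - g (tlv τ j) (ybar j) - ε j|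
        ≤ |g (tlv τ j) (y j) - g (tlv τ j) (ybar j)| + |ε j| := abs_sub _ _
      _ ≤ Lg * E j + εb := add_le_add (hLip _ _ _) (hεble j h1 h2)
  -- key one-step estimate
  have key : ∀ n, 1 ≤ n → n ≤ m → E n ≤ E (n-1) + τ n * (Lg * φ n + εb) := by
    intro n h1 h2
    have hdi := doc_inverse τ N hτ n h1 (le_trans h2 hmN) v
    have h3 : |v n - v (n-1)| ≤ τ n * (Lg * φ n + εb) := by
      rw [← hdi]
      calc |∑ j ∈ Finset.Icc 1 n, doc τ n (n-j) * D2 τ v j|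
          ≤ ∑ j ∈ Finset.Icc 1 n, |doc τ n (n-j) * D2 τ v j| :=
            Finset.abs_sum_le_sum_abs _ _
        _ ≤ ∑ j ∈ Finset.Icc 1 n, doc τ n (n-j) * (Lg * φ n + εb) := by
            apply Finset.sum_le_sum
            intro j hj
            simp only [Finset.mem_Icc] at hj
            have hθ : 0 ≤ doc τ n (n-j) :=
              doc_nonneg τ N hτ n h1 (le_trans h2 hmN) (n-j) (by omega)
            rw [abs_mul, abs_of_nonneg hθ]
            apply mul_le_mul_of_nonneg_left _ hθ
            calc |D2 τ v j| ≤ Lg * E j + εb := hD2v j hj.1 (le_trans hj.2 h2)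
              _ ≤ Lg * φ n + εb := by
                  have := le_trans (hEφ j) (hφmono j n hj.2)
                  nlinarith
        _ = τ n * (Lg * φ n + εb) := by
            rw [← Finset.sum_mul, doc_sum τ N hτ n h1 (le_trans h2 hmN)]
    calc E n = |v n| := rfl
      _ ≤ |v (n-1)| + |v n - v (n-1)| := by
          have := abs_sub_abs_le_abs_sub (v n) (v (n-1))
          linarith [abs_nonneg (v n - v (n-1))]
      _ ≤ E (n-1) + τ n * (Lg * φ n + εb) := add_le_add le_rfl h3
  -- cumulative estimate for the running maximum
  have cum : ∀ n, n ≤ m → φ n ≤ E 0 + ∑ k ∈ Finset.Icc 1 n, τ k * (Lg * φ k + εb) := by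
    intro n
    induction n with
    | zero => intro _; simp [hφ0]
    | succ n ih =>
      intro hnm
      have hterm : 0 ≤ τ (n+1) * (Lg * φ (n+1) + εb) := by
        have := hτ (n+1) (by omega) (le_trans hnm hmN)
        have := hφnn (n+1)
        positivity
      have hsum : ∑ k ∈ Finset.Icc 1 (n+1), τ k * (Lg * φ k + εb)
          = ∑ k ∈ Finset.Icc 1 n, τ k * (Lg * φ k + εb) + τ (n+1) * (Lg * φ (n+1) + εb) :=
        Finset.sum_Icc_succ_top (by omega) _
      rw [hφs, hsum]
      apply max_le
      · have := ih (by omega)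
        linarith
      · have h1 := key (n+1) (by omega) hnm
        have h2 := ih (by omega)
        have h3 := hEφ n
        simp only [Nat.add_sub_cancel] at h1
        linarith
  -- the Gronwall product
  set P : ℕ → ℝ := fun j => ∏ k ∈ Finset.Icc 1 j, (1 + 2 * Lg * τ k) with hPdef
  have hPpos : ∀ j, j ≤ N → 0 < P j := by
    intro j hj
    apply Finset.prod_pos
    intro k hk
    simp only [Finset.mem_Icc] at hk
    have := hτ k hk.1 (le_trans hk.2 hj)
    nlinarith
  have hPtel : ∀ j, P j = 1 + ∑ k ∈ Finset.Icc 1 j, 2 * Lg * τ k * P (k-1) := by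
    intro j
    induction j with
    | zero => simp [hPdef]
    | succ j ih =>
      have h1 : P (j+1) = P j * (1 + 2 * Lg * τ (j+1)) :=
        Finset.prod_Icc_succ_top (by omega) _
      have h2 : ∑ k ∈ Finset.Icc 1 (j+1), 2 * Lg * τ k * P (k-1)
          = ∑ k ∈ Finset.Icc 1 j, 2 * Lg * τ k * P (k-1) + 2 * Lg * τ (j+1) * P j := by
        rw [Finset.sum_Icc_succ_top (by omega)]
        norm_num
      rw [h1, h2]
      linear_combination ih
  -- Gronwall induction
  have G : ∀ n, n ≤ m → φ n ≤ 2 * (E 0 + εb * tlv τ n) * P (n-1) := by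
    intro n
    induction n using Nat.strong_induction_on with
    | _ n ih =>
      intro hnm
      rcases Nat.eq_zero_or_pos n with h0 | h1
      · subst h0
        have h1 : tlv τ 0 = 0 := by simp [tlv]
        have h2 : P 0 = 1 := by simp [hPdef]
        rw [hφ0, h1, h2]
        have := abs_nonneg (v 0)
        have : 0 ≤ E 0 := this
        linarith
      · -- main case
        set A : ℝ := 2 * (E 0 + εb * tlv τ n) with hAdef
        have htlvn : 0 ≤ tlv τ n := tlv_nonneg τ N hτ n (le_trans hnm hmN)
        have hA0 : 0 ≤ A := by
          have : (0:ℝ) ≤ E 0 := abs_nonneg (v 0)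
          nlinarith
        set S : ℝ := ∑ k ∈ Finset.Icc 1 (n-1), τ k * P (k-1) with hSdef
        have hS0 : 0 ≤ S := by
          apply Finset.sum_nonneg
          intro k hk
          simp only [Finset.mem_Icc] at hk
          have h1 := hτ k hk.1 (by omega)
          have h2 := hPpos (k-1) (by omega)
          positivity
        -- split the cumulative sum
        have hsplit : ∑ k ∈ Finset.Icc 1 n, τ k * (Lg * φ k + εb)
            = ∑ k ∈ Finset.Icc 1 (n-1), τ k * (Lg * φ k + εb) + τ n * (Lg * φ n + εb) := by
          obtain ⟨p, rfl⟩ : ∃ p, n = p + 1 := ⟨n-1, by omega⟩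
          rw [Finset.sum_Icc_succ_top (by omega)]
          norm_num
        -- bound the sum over earlier indices
        have hpart : ∑ k ∈ Finset.Icc 1 (n-1), τ k * (Lg * φ k + εb)
            ≤ Lg * A * S + εb * tlv τ (n-1) := by
          have : ∀ k ∈ Finset.Icc 1 (n-1), τ k * (Lg * φ k + εb)
              ≤ Lg * A * (τ k * P (k-1)) + εb * τ k := by
            intro k hk
            simp only [Finset.mem_Icc] at hk
            have hτk := hτ k hk.1 (by omega)
            have hφk : φ k ≤ A * P (k-1) := by
              have h2 := ih k (by omega) (by omega)
              have h3 : tlv τ k ≤ tlv τ n := tlv_mono τ N hτ k n (by omega) (le_trans hnm hmN)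
              have h4 := hPpos (k-1) (by omega)
              calc φ k ≤ 2 * (E 0 + εb * tlv τ k) * P (k-1) := h2
                _ ≤ A * P (k-1) := by
                    apply mul_le_mul_of_nonneg_right _ h4.le
                    nlinarith
            have hmul := mul_le_mul_of_nonneg_left hφk (by positivity : (0:ℝ) ≤ Lg * τ k)
            nlinarith [hmul]
          calc ∑ k ∈ Finset.Icc 1 (n-1), τ k * (Lg * φ k + εb)
              ≤ ∑ k ∈ Finset.Icc 1 (n-1), (Lg * A * (τ k * P (k-1)) + εb * τ k) :=
                Finset.sum_le_sum this
            _ = Lg * A * S + εb * tlv τ (n-1) := by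
                rw [Finset.sum_add_distrib, ← Finset.mul_sum, ← Finset.mul_sum]
                rfl
        -- absorb the last term
        have h4step : τ n * (4 * Lg) ≤ 1 := by
          have h := hstep n h1 (le_trans hnm hmN)
          rw [le_div_iff₀ (by positivity)] at h
          exact h
        have htlvd : tlv τ (n-1) + τ n = tlv τ n := by
          have := tlv_diff τ n h1
          linarith
        have hcum := cum n hnm
        rw [hsplit] at hcum
        have hmain : (3/4) * φ n ≤ A/2 + Lg * A * S := by
          have hφn := hφnn n
          have habs : τ n * (Lg * φ n) ≤ (1/4) * φ n := by
            nlinarith [mul_le_mul_of_nonneg_right h4step hφn]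
          have hεt : εb * tlv τ (n-1) + εb * τ n = εb * tlv τ n := by
            rw [← htlvd]; ring
          linarith [hcum, hpart, habs, hεt]
        have hPt := hPtel (n-1)
        have hPS : P (n-1) = 1 + 2 * Lg * S := by
          rw [hPt, hSdef, Finset.mul_sum]
          congr 1
          apply Finset.sum_congr rfl
          intro k _
          ring
        rw [hPS]
        linarith [hmain, hA0, mul_nonneg (mul_nonneg hLg.le hA0) hS0]
  -- conclusion
  have hfin := le_trans (hEφ m) (G m le_rfl)
  have hPexp : P (m-1) ≤ Real.exp (4 * Lg * tlv τ (m-1)) := by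
    have : tlv τ (m-1) = ∑ k ∈ Finset.Icc 1 (m-1), τ k := rfl
    rw [this, Finset.mul_sum, Real.exp_sum]
    apply Finset.prod_le_prod
    · intro k hk
      simp only [Finset.mem_Icc] at hk
      have := hτ k hk.1 (by omega)
      nlinarith
    · intro k hk
      simp only [Finset.mem_Icc] at hk
      have hτk := hτ k hk.1 (by omega)
      calc 1 + 2 * Lg * τ k ≤ 4 * Lg * τ k + 1 := by nlinarith
        _ ≤ Real.exp (4 * Lg * τ k) := Real.add_one_le_exp _
  have hexp0 : 0 < Real.exp (4 * Lg * tlv τ (m-1)) := Real.exp_pos _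
  have htm : 0 ≤ tlv τ m := tlv_nonneg τ N hτ m hmN
  have hE0 : (0:ℝ) ≤ E 0 := abs_nonneg (v 0)
  have hA0 : 0 ≤ 2 * (E 0 + εb * tlv τ m) := by nlinarith
  calc |y m - ybar m| = E m := rfl
    _ ≤ 2 * (E 0 + εb * tlv τ m) * P (m-1) := hfin
    _ ≤ 2 * (E 0 + εb * tlv τ m) * Real.exp (4 * Lg * tlv τ (m-1)) :=
        mul_le_mul_of_nonneg_left hPexp hA0
    _ ≤ 2 * Real.exp (4 * Lg * tlv τ (m-1)) * (E 0 + 2 * tlv τ m * εb) := by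
        nlinarith [mul_nonneg htm hεb0]
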